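/- Let L ≥ 1 and let h, g ∈ ℂ^L. Let φ = arg⟪h, g⟫ and Γ = min(‖h‖², ‖g‖²). Fix υ ∈ ℝ and let (d₁, d₂) ∈ ℂ × ℂ with (d₁, d₂) ≠ (0, 0). Let d_min > 0 be any real number such that d_min ≤ |d₁| whenever d₁ ≠ 0 and d_min ≤ |d₂| whenever d₂ ≠ 0. Define C₃ = min(1, 2·(1 − |cos(arg d₂ − arg d₁ + υ)|)). Then the phase-rotated decision distance satisfies ‖d₁ • g + (exp(i(υ + φ))·d₂) • h‖ ≥ √(C₃ · Γ · d_min²). (Proposition 1: under PR preprocessing with u₁ = exp(i(υ+φ)), u₂ = 1, every decision distance is lower bounded by √(C₃ Γ d_min²).) -/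

import Mathlib

open scoped ComplexConjugate

set_option maxHeartbeats 1000000

/-- Proposition 1: under PR preprocessing with `u₁ = exp(i(υ+φ))`, `u₂ = 1`,
every decision distance is lower bounded by `√(C₃ Γ d_min²)`. -/
theorem pr_preprocessing_decision_distance_lower_bound
    (L : ℕ) (hL : 1 ≤ L) (h g : EuclideanSpace ℂ (Fin L))
    (φ : ℝ) (hφ : φ = Complex.arg (inner ℂ h g : ℂ))
    (Γ : ℝ) (hΓ : Γ = min (‖h‖ ^ 2) (‖g‖ ^ 2))
    (υ : ℝ) (d₁ d₂ : ℂ) (hd : (d₁, d₂) ≠ (0, 0))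
    (dmin : ℝ) (hdmin : 0 < dmin)
    (hdmin1 : d₁ ≠ 0 → dmin ≤ ‖d₁‖)
    (hdmin2 : d₂ ≠ 0 → dmin ≤ ‖d₂‖)
    (C₃ : ℝ)
    (hC₃ : C₃ = min 1 (2 * (1 - |Real.cos (d₂.arg - d₁.arg + υ)|))) :
    ‖d₁ • g + (Complex.exp (Complex.I * (υ + φ)) * d₂) • h‖ ≥
      Real.sqrt (C₃ * Γ * dmin ^ 2) := by
  set θ : ℝ := d₂.arg - d₁.arg + υ with hθ
  have habs : |Real.cos θ| ≤ 1 := Real.abs_cos_le_one θ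
  have hcos : -|Real.cos θ| ≤ Real.cos θ := neg_abs_le _
  have hC₃0 : 0 ≤ C₃ := by
    rw [hC₃]; exact le_min one_pos.le (by nlinarith)
  have hC₃1 : C₃ ≤ 1 := by rw [hC₃]; exact min_le_left _ _
  have hC₃2 : C₃ ≤ 2 * (1 - |Real.cos θ|) := by rw [hC₃]; exact min_le_right _ _
  have hΓh : Γ ≤ ‖h‖ ^ 2 := by rw [hΓ]; exact min_le_left _ _
  have hΓg : Γ ≤ ‖g‖ ^ 2 := by rw [hΓ]; exact min_le_right _ _
  have hΓ0 : 0 ≤ Γ := by rw [hΓ]; positivity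
  have hΓhg : Γ ≤ ‖h‖ * ‖g‖ := by
    rcases le_total ‖h‖ ‖g‖ with hc | hc
    · calc Γ ≤ ‖h‖ ^ 2 := hΓh
        _ ≤ ‖h‖ * ‖g‖ := by nlinarith [norm_nonneg h]
    · calc Γ ≤ ‖g‖ ^ 2 := hΓg
        _ ≤ ‖h‖ * ‖g‖ := by nlinarith [norm_nonneg g]
  set v : EuclideanSpace ℂ (Fin L) :=
    d₁ • g + (Complex.exp (Complex.I * (↑υ + ↑φ)) * d₂) • h with hv
  -- main squared bound
  have main : C₃ * Γ * dmin ^ 2 ≤ ‖v‖ ^ 2 := by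
    by_cases h1 : d₁ = 0
    · have h2 : d₂ ≠ 0 := by
        intro h2; exact hd (by simp [h1, h2])
      have hval : ‖v‖ = ‖d₂‖ * ‖h‖ := by
        rw [hv, h1]
        simp [norm_smul, Complex.norm_exp]
      have hd2 : dmin ≤ ‖d₂‖ := hdmin2 h2
      rw [hval]
      nlinarith [norm_nonneg h, norm_nonneg d₂, sq_nonneg dmin,
        mul_le_mul hΓh (pow_le_pow_left₀ hdmin.le hd2 2) (sq_nonneg dmin) (sq_nonneg ‖h‖),
        mul_nonneg hΓ0 (sq_nonneg dmin)]
    · by_cases h2 : d₂ = 0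
      · have hval : ‖v‖ = ‖d₁‖ * ‖g‖ := by
          rw [hv, h2]
          simp [norm_smul]
        have hd1 : dmin ≤ ‖d₁‖ := hdmin1 h1
        rw [hval]
        nlinarith [norm_nonneg g, norm_nonneg d₁, sq_nonneg dmin,
          mul_le_mul hΓg (pow_le_pow_left₀ hdmin.le hd1 2) (sq_nonneg dmin) (sq_nonneg ‖g‖),
          mul_nonneg hΓ0 (sq_nonneg dmin)]
      · -- both nonzero
        have hd1 : dmin ≤ ‖d₁‖ := hdmin1 h1
        have hd2 : dmin ≤ ‖d₂‖ := hdmin2 h2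
        set R : ℝ := ‖(inner ℂ h g : ℂ)‖ with hR
        have hRnn : 0 ≤ R := norm_nonneg _
        have hRle : R ≤ ‖h‖ * ‖g‖ := by
          rw [hR]
          exact norm_inner_le_norm h g
        -- expand the norm
        have hexp : ‖v‖ ^ 2 = (‖d₁‖)^2 * ‖g‖^2 + (‖d₂‖)^2 * ‖h‖^2
            + 2 * (‖d₁‖ * ‖d₂‖ * R) * Real.cos θ := by
          have e0 : ‖v‖ ^ 2 = ‖d₁ • g‖^2
              + 2 * RCLike.re (inner ℂ (d₁ • g) ((Complex.exp (Complex.I * (↑υ + ↑φ)) * d₂) • h) : ℂ)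
              + ‖(Complex.exp (Complex.I * (↑υ + ↑φ)) * d₂) • h‖^2 := norm_add_sq _ _
          have e1 : (inner ℂ (d₁ • g) ((Complex.exp (Complex.I * (↑υ + ↑φ)) * d₂) • h) : ℂ)
              = (starRingEnd ℂ) d₁ * (Complex.exp (Complex.I * (↑υ + ↑φ)) * d₂)
                * (inner ℂ g h : ℂ) := by
            rw [inner_smul_left, inner_smul_right]; ring
          -- polar forms
          have p1 : (starRingEnd ℂ) d₁
              = ((‖d₁‖ : ℝ) : ℂ) * Complex.exp (-(d₁.arg : ℂ) * Complex.I) := by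
            conv_lhs => rw [← Complex.norm_mul_exp_arg_mul_I d₁]
            rw [map_mul, ← Complex.exp_conj]
            simp [Complex.conj_ofReal]
          have p2 : d₂ = ((‖d₂‖ : ℝ) : ℂ) * Complex.exp ((d₂.arg : ℂ) * Complex.I) :=
            (Complex.norm_mul_exp_arg_mul_I d₂).symm
          have p3 : (inner ℂ g h : ℂ) = (R : ℂ) * Complex.exp (-(φ : ℂ) * Complex.I) := by
            have : (inner ℂ h g : ℂ) = (R : ℂ) * Complex.exp ((φ : ℂ) * Complex.I) := by
              rw [hR, hφ]; exact (Complex.norm_mul_exp_arg_mul_I _).symm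
            rw [← inner_conj_symm g h, this, map_mul, ← Complex.exp_conj]
            simp [Complex.conj_ofReal]
          have e2 : (starRingEnd ℂ) d₁ * (Complex.exp (Complex.I * (↑υ + ↑φ)) * d₂)
                * (inner ℂ g h : ℂ)
              = ((‖d₁‖ * ‖d₂‖ * R : ℝ) : ℂ)
                * Complex.exp ((θ : ℂ) * Complex.I) := by
            rw [p1]; nth_rewrite 1 [p2]; rw [p3]
            rw [show ((‖d₁‖ : ℝ) : ℂ) * Complex.exp (-(d₁.arg : ℂ) * Complex.I)
                * (Complex.exp (Complex.I * (↑υ + ↑φ))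
                  * (((‖d₂‖ : ℝ) : ℂ) * Complex.exp ((d₂.arg : ℂ) * Complex.I)))
                * ((R : ℂ) * Complex.exp (-(φ : ℂ) * Complex.I))
              = (((‖d₁‖ : ℝ) : ℂ) * ((‖d₂‖ : ℝ) : ℂ) * (R : ℂ))
                * (Complex.exp (-(d₁.arg : ℂ) * Complex.I)
                  * Complex.exp (Complex.I * (↑υ + ↑φ))
                  * Complex.exp ((d₂.arg : ℂ) * Complex.I)
                  * Complex.exp (-(φ : ℂ) * Complex.I)) from by ring]
            rw [← Complex.exp_add, ← Complex.exp_add, ← Complex.exp_add]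
            congr 1
            · push_cast; ring
            · congr 1
              simp only [hθ]
              push_cast
              ring
          have e3 : RCLike.re ((((‖d₁‖ * ‖d₂‖ * R : ℝ)) : ℂ)
              * Complex.exp ((θ : ℂ) * Complex.I))
              = (‖d₁‖ * ‖d₂‖ * R) * Real.cos θ := by
            simp [Complex.exp_ofReal_mul_I_re]
          rw [e0, e1, e2, e3, norm_smul, norm_smul]
          simp only [norm_mul, Complex.norm_exp]
          have : (Complex.I * (↑υ + ↑φ)).re = 0 := by simp
          rw [this, Real.exp_zero]
          ring
        rw [hexp]
        have a1 := norm_nonneg d₁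
        have a2 := norm_nonneg d₂
        have hcross : -(‖h‖ * ‖g‖ * |Real.cos θ|) ≤ R * Real.cos θ := by
          have k1 : -(R * |Real.cos θ|) ≤ R * Real.cos θ := by nlinarith
          have k2 : R * |Real.cos θ| ≤ ‖h‖ * ‖g‖ * |Real.cos θ| :=
            mul_le_mul_of_nonneg_right hRle (abs_nonneg _)
          linarith
        have hcross2 := mul_le_mul_of_nonneg_left hcross
          (mul_nonneg a1 a2)
        have hab := mul_le_mul (mul_le_mul hd1 hd2 hdmin.le a1) hΓhg hΓ0
          (mul_nonneg a1 a2)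
        have hab2 := mul_le_mul_of_nonneg_left hab
          (by linarith : (0:ℝ) ≤ 2 * (1 - |Real.cos θ|))
        have hc3 := mul_le_mul_of_nonneg_right hC₃2
          (mul_nonneg (mul_nonneg hdmin.le hdmin.le) hΓ0)
        linarith [hcross2, hab2, hc3,
          sq_nonneg (‖d₁‖ * ‖g‖ - ‖d₂‖ * ‖h‖)]
  calc Real.sqrt (C₃ * Γ * dmin ^ 2) ≤ Real.sqrt (‖v‖ ^ 2) := Real.sqrt_le_sqrt main
    _ = ‖v‖ := Real.sqrt_sq (norm_nonneg v)
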